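/- If ξ^r = o(r) and ξ^a = o(1) as r → ∞ (with the derivative compatibility ∂_r ξ^μ = o(r^{m-1}) when ξ^μ = o(r^m), and angular/time derivatives of the same orders), then ξ automatically satisfies the asymptotic Killing conditions (L_ξ ḡ)_{rr} = o(r^{-2}), (L_ξ ḡ)_{ar} = o(r), (L_ξ ḡ)_{ab} = o(r²) for the AdS metric ḡ. -/

import Mathlib

open Filter

/-- Coordinate indices: `0 = τ`, `1 = r`, `A ∈ {2,…,n-1}` the angles `y^A`. -/
def idxC (n : ℕ) : Finset ℕ := insert 0 (insert 1 (Finset.Ico 2 n))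

/-- Partial derivative along coordinate `μ`. -/
noncomputable def pd (μ : ℕ) (F : (ℕ → ℝ) → ℝ) (p : ℕ → ℝ) : ℝ :=
  deriv (fun s => F (Function.update p μ s)) (p μ)

/-- `f_2 = 1`, `f_A = sin²y² ⋯ sin²y^{A-1}`. -/
noncomputable def fAc (A : ℕ) (p : ℕ → ℝ) : ℝ := ∏ j ∈ Finset.Ico 2 A, Real.sin (p j) ^ 2

/-- The AdS metric `ḡ`, with `p 1 = r`. -/
noncomputable def gbar (l : ℝ) (μ ν : ℕ) (p : ℕ → ℝ) : ℝ :=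
  if μ = 0 ∧ ν = 0 then -(1 + (p 1) ^ 2 / l ^ 2)
  else if μ = 1 ∧ ν = 1 then (1 + (p 1) ^ 2 / l ^ 2)⁻¹
  else if μ = ν then (p 1) ^ 2 * fAc μ p
  else 0

/-- `(L_ξ ḡ)_{μν} = ξ^λ ∂_λ ḡ_{μν} + ḡ_{λν} ∂_μ ξ^λ + ḡ_{μλ} ∂_ν ξ^λ`. -/
noncomputable def lieG (n : ℕ) (l : ℝ) (ξ : ℕ → (ℕ → ℝ) → ℝ) (μ ν : ℕ)
    (p : ℕ → ℝ) : ℝ :=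
  ∑ lam ∈ idxC n,
    (ξ lam p * pd lam (gbar l μ ν) p + gbar l lam ν p * pd μ (ξ lam) p
      + gbar l μ lam p * pd ν (ξ lam) p)

/-- `F = o(r^s)` as `r → ∞` at fixed `(τ, y)`. -/
def SmallO (F : (ℕ → ℝ) → ℝ) (s : ℤ) : Prop :=
  ∀ p : ℕ → ℝ,
    Tendsto (fun r : ℝ => F (Function.update p 1 r) / r ^ s) atTop (nhds 0)

lemma mem_idxC {n lam : ℕ} : lam ∈ idxC n ↔ lam = 0 ∨ lam = 1 ∨ (2 ≤ lam ∧ lam < n) := by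
  simp [idxC, Finset.mem_Ico]

lemma fAc_congr {A : ℕ} {p p' : ℕ → ℝ} (h : ∀ j, 2 ≤ j → j < A → p j = p' j) :
    fAc A p = fAc A p' := by
  unfold fAc
  refine Finset.prod_congr rfl fun j hj => ?_
  rw [h j (Finset.mem_Ico.1 hj).1 (Finset.mem_Ico.1 hj).2]

lemma fAc_update_lt {A c : ℕ} (hc : c < 2) (p : ℕ → ℝ) (s : ℝ) :
    fAc A (Function.update p c s) = fAc A p := by
  refine fAc_congr fun j h2 hA => ?_
  exact Function.update_of_ne (by omega) _ _

lemma gbar00 (l : ℝ) (p : ℕ → ℝ) : gbar l 0 0 p = -(1 + (p 1)^2 / l^2) := by simp [gbar]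

lemma gbar11 (l : ℝ) (p : ℕ → ℝ) : gbar l 1 1 p = (1 + (p 1)^2 / l^2)⁻¹ := by simp [gbar]

lemma gbar_ne (l : ℝ) {a b : ℕ} (h : a ≠ b) (p : ℕ → ℝ) : gbar l a b p = 0 := by
  unfold gbar
  rw [if_neg (by rintro ⟨rfl, rfl⟩; exact h rfl), if_neg (by rintro ⟨rfl, rfl⟩; exact h rfl),
    if_neg h]

lemma gbar_diag (l : ℝ) {a : ℕ} (h2 : 2 ≤ a) (p : ℕ → ℝ) :
    gbar l a a p = (p 1)^2 * fAc a p := by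
  unfold gbar
  rw [if_neg (by rintro ⟨rfl, -⟩; omega), if_neg (by rintro ⟨rfl, -⟩; omega), if_pos rfl]

/-- `gbar` does not depend on coordinates other than `1` and the angles `< μ`;
in particular off-diagonal it is the zero function. -/
lemma pd_gbar_offdiag (l : ℝ) {a b : ℕ} (h : a ≠ b) (μ : ℕ) (p : ℕ → ℝ) :
    pd μ (gbar l a b) p = 0 := by
  unfold pd
  have : (fun s => gbar l a b (Function.update p μ s)) = fun _ => (0:ℝ) := by
    funext s; rw [gbar_ne l h]
  rw [this, deriv_const]

lemma update_one_ne {c : ℕ} (hc : c ≠ 1) (p : ℕ → ℝ) (s : ℝ) :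
    Function.update p c s 1 = p 1 :=
  Function.update_of_ne (Ne.symm hc) _ _

lemma pd_gbar00_ne (l : ℝ) {c : ℕ} (hc : c ≠ 1) (p : ℕ → ℝ) :
    pd c (gbar l 0 0) p = 0 := by
  unfold pd
  have : (fun s => gbar l 0 0 (Function.update p c s)) = fun _ => gbar l 0 0 p := by
    funext s; rw [gbar00, gbar00, update_one_ne hc]
  rw [this, deriv_const]

lemma pd_gbar11_ne (l : ℝ) {c : ℕ} (hc : c ≠ 1) (p : ℕ → ℝ) :
    pd c (gbar l 1 1) p = 0 := by
  unfold pd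
  have : (fun s => gbar l 1 1 (Function.update p c s)) = fun _ => gbar l 1 1 p := by
    funext s; rw [gbar11, gbar11, update_one_ne hc]
  rw [this, deriv_const]

lemma pd1_gbar00 (l : ℝ) (p : ℕ → ℝ) :
    pd 1 (gbar l 0 0) p = -(2 * p 1 / l^2) := by
  unfold pd
  have h : (fun s => gbar l 0 0 (Function.update p 1 s)) = fun s => -(1 + s^2/l^2) := by
    funext s; rw [gbar00, Function.update_self]
  rw [h]
  have hd : HasDerivAt (fun s:ℝ => -(1 + s^2/l^2)) (-(2 * p 1 / l^2)) (p 1) := by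
    have := ((hasDerivAt_const (p 1) (1:ℝ)).add ((hasDerivAt_pow 2 (p 1)).div_const (l^2))).neg
    exact this.congr_deriv (by norm_num)
  exact hd.deriv

lemma hasDerivAt_u (l x : ℝ) : HasDerivAt (fun s:ℝ => 1 + s^2/l^2) (2 * x / l^2) x := by
  have := (hasDerivAt_const x (1:ℝ)).add ((hasDerivAt_pow 2 x).div_const (l^2))
  exact this.congr_deriv (by norm_num)

lemma pd1_gbar11 (l : ℝ) (hl : 0 < l) (p : ℕ → ℝ) :
    pd 1 (gbar l 1 1) p = -(2 * p 1 / l^2) / (1 + (p 1)^2/l^2)^2 := by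
  unfold pd
  have h : (fun s => gbar l 1 1 (Function.update p 1 s)) = fun s => (1 + s^2/l^2)⁻¹ := by
    funext s; rw [gbar11, Function.update_self]
  rw [h]
  have hne : (1 + (p 1)^2/l^2) ≠ 0 := by positivity
  exact ((hasDerivAt_u l (p 1)).inv hne).deriv

lemma pd1_gbar_diag (l : ℝ) {a : ℕ} (h2 : 2 ≤ a) (p : ℕ → ℝ) :
    pd 1 (gbar l a a) p = 2 * p 1 * fAc a p := by
  unfold pd
  have h : (fun s => gbar l a a (Function.update p 1 s)) = fun s => s^2 * fAc a p := by
    funext s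
    rw [gbar_diag l h2, Function.update_self, fAc_update_lt one_lt_two]
  rw [h]
  have hd : HasDerivAt (fun s:ℝ => s^2 * fAc a p) (2 * p 1 * fAc a p) (p 1) := by
    simpa using (hasDerivAt_pow 2 (p 1)).mul_const (fAc a p)
  exact hd.deriv

lemma pd_gbar_diag_ne (l : ℝ) {a c : ℕ} (h2 : 2 ≤ a) (hc : c ≠ 1) (p : ℕ → ℝ) :
    pd c (gbar l a a) p = (p 1)^2 * deriv (fun s => fAc a (Function.update p c s)) (p c) := by
  unfold pd
  have h : (fun s => gbar l a a (Function.update p c s))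
      = fun s => (p 1)^2 * fAc a (Function.update p c s) := by
    funext s; rw [gbar_diag l h2, update_one_ne hc]
  rw [h, deriv_const_mul_field]

lemma pd0_gbar_diag (l : ℝ) {a : ℕ} (h2 : 2 ≤ a) (p : ℕ → ℝ) :
    pd 0 (gbar l a a) p = 0 := by
  rw [pd_gbar_diag_ne l h2 (by omega)]
  have : (fun s => fAc a (Function.update p 0 s)) = fun _ => fAc a p := by
    funext s; exact fAc_update_lt zero_lt_two p s
  rw [this, deriv_const, mul_zero]

/-- the angular derivative of a diagonal angular metric component,
evaluated along the ray `r ↦ update p 1 r`, is `r² ×` a constant. -/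
lemma pd_gbar_diag_ray (l : ℝ) {a c : ℕ} (h2 : 2 ≤ a) (hc : c ≠ 1) (p : ℕ → ℝ) (r : ℝ) :
    pd c (gbar l a a) (Function.update p 1 r)
      = r^2 * deriv (fun s => fAc a (Function.update p c s)) (p c) := by
  rw [pd_gbar_diag_ne l h2 hc, Function.update_self]
  have h1 : (fun s => fAc a (Function.update (Function.update p 1 r) c s))
      = fun s => fAc a (Function.update p c s) := by
    funext s
    refine fAc_congr fun j hj2 hja => ?_
    by_cases hjc : j = c
    · subst hjc; rw [Function.update_self, Function.update_self]
    · rw [Function.update_of_ne hjc, Function.update_of_ne hjc,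
        Function.update_of_ne (by omega : j ≠ 1)]
  have h3 : Function.update p 1 r c = p c := Function.update_of_ne hc _ _
  rw [h1, h3]

-- limit lemmas
lemma tendsto_u_atTop (l : ℝ) (hl : 0 < l) :
    Tendsto (fun r:ℝ => 1 + r^2/l^2) atTop atTop :=
  tendsto_atTop_add_const_left _ 1 ((tendsto_pow_atTop two_ne_zero).atTop_div_const (by positivity))

lemma tendsto_uinv (l : ℝ) (hl : 0 < l) :
    Tendsto (fun r:ℝ => (1 + r^2/l^2)⁻¹) atTop (nhds 0) :=
  (tendsto_u_atTop l hl).inv_tendsto_atTop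

lemma tendsto_u_div_sq (l : ℝ) (hl : 0 < l) :
    Tendsto (fun r:ℝ => (1 + r^2/l^2)/r^2) atTop (nhds (1/l^2)) := by
  have h : Tendsto (fun r:ℝ => (r^2)⁻¹ + 1/l^2) atTop (nhds (0 + 1/l^2)) :=
    ((tendsto_pow_atTop two_ne_zero).inv_tendsto_atTop).add tendsto_const_nhds
  rw [zero_add] at h
  refine h.congr' ?_
  filter_upwards [eventually_ge_atTop (1:ℝ)] with r hr
  have hr0 : (r:ℝ) ≠ 0 := by linarith
  have hl0 : l ≠ 0 := ne_of_gt hl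
  rw [eq_div_iff (pow_ne_zero 2 hr0)]
  field_simp
  try ring

lemma tendsto_sq_div_u (l : ℝ) (hl : 0 < l) :
    Tendsto (fun r:ℝ => r^2/(1 + r^2/l^2)) atTop (nhds (l^2)) := by
  have h := (tendsto_u_div_sq l hl).inv₀ (by positivity)
  have h2 : ((1:ℝ)/l^2)⁻¹ = l^2 := by
    rw [one_div, inv_inv]
  rw [h2] at h
  refine h.congr fun r => ?_
  rw [inv_div]

-- zpow helpers
lemma div_zpow_neg_two (a r : ℝ) : a / r^(-2:ℤ) = a * r^2 := by
  rw [zpow_neg, div_inv_eq_mul, show ((2:ℤ)) = ((2:ℕ):ℤ) from rfl, zpow_natCast]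

lemma div_zpow_neg_one (a r : ℝ) : a / r^(-1:ℤ) = a * r := by
  rw [zpow_neg, div_inv_eq_mul, zpow_one]

lemma div_zpow_two (a r : ℝ) : a / r^(2:ℤ) = a / r^2 := by
  rw [show ((2:ℤ)) = ((2:ℕ):ℤ) from rfl, zpow_natCast]

lemma gbar_symm (l : ℝ) (a b : ℕ) (p : ℕ → ℝ) : gbar l a b p = gbar l b a p := by
  by_cases h : a = b
  · subst h; rfl
  · rw [gbar_ne l h, gbar_ne l (Ne.symm h)]

/-- `g_{aa}·X/r → 0` when `X·r → 0`, for `a = 0` or `a ≥ 2`. -/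
lemma tendsto_gaa_mul_div (l : ℝ) (hl : 0 < l) {a : ℕ} (ha2 : a = 0 ∨ 2 ≤ a) (p : ℕ → ℝ)
    (X : ℝ → ℝ) (hX : Tendsto (fun r => X r * r) atTop (nhds 0)) :
    Tendsto (fun r => gbar l a a (Function.update p 1 r) * X r / r) atTop (nhds 0) := by
  rcases ha2 with rfl | h2
  · have t : Tendsto (fun r:ℝ => -((1+r^2/l^2)/r^2) * (X r * r)) atTop
        (nhds (-(1/l^2) * 0)) := ((tendsto_u_div_sq l hl).neg).mul hX
    rw [mul_zero] at t
    refine t.congr' ?_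
    filter_upwards [eventually_ge_atTop (1:ℝ)] with r hr1
    have hr0 : r ≠ 0 := by linarith
    rw [gbar00, Function.update_self]
    field_simp
    try ring
  · have t : Tendsto (fun r => fAc a p * (X r * r)) atTop (nhds (fAc a p * 0)) :=
      tendsto_const_nhds.mul hX
    rw [mul_zero] at t
    refine t.congr' ?_
    filter_upwards [eventually_ge_atTop (1:ℝ)] with r hr1
    have hr0 : r ≠ 0 := by linarith
    rw [gbar_diag l h2, Function.update_self, fAc_update_lt one_lt_two]
    field_simp
    try ring

/-- `g_{aa}·X/r² → 0` when `X → 0`, for `a = 0` or `a ≥ 2`. -/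
lemma tendsto_gaa_mul_div_sq (l : ℝ) (hl : 0 < l) {a : ℕ} (ha2 : a = 0 ∨ 2 ≤ a) (p : ℕ → ℝ)
    (X : ℝ → ℝ) (hX : Tendsto X atTop (nhds 0)) :
    Tendsto (fun r => gbar l a a (Function.update p 1 r) * X r / r^(2:ℤ)) atTop (nhds 0) := by
  rcases ha2 with rfl | h2
  · have t : Tendsto (fun r:ℝ => -((1+r^2/l^2)/r^2) * X r) atTop
        (nhds (-(1/l^2) * 0)) := ((tendsto_u_div_sq l hl).neg).mul hX
    rw [mul_zero] at t
    refine t.congr' ?_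
    filter_upwards [eventually_ge_atTop (1:ℝ)] with r hr1
    have hr0 : r ≠ 0 := by linarith
    rw [gbar00, Function.update_self, div_zpow_two]
    field_simp
    try ring
  · have t : Tendsto (fun r => fAc a p * X r) atTop (nhds (fAc a p * 0)) :=
      tendsto_const_nhds.mul hX
    rw [mul_zero] at t
    refine t.congr' ?_
    filter_upwards [eventually_ge_atTop (1:ℝ)] with r hr1
    have hr0 : r ≠ 0 := by linarith
    rw [gbar_diag l h2, Function.update_self, fAc_update_lt one_lt_two, div_zpow_two]
    field_simp
    try ring

/-- `g_{λb}·X/r² → 0` for arbitrary `λ` when `X → 0`, `b = 0` or `b ≥ 2`. -/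
lemma tendsto_goff_mul_div_sq (l : ℝ) (hl : 0 < l) {lam b : ℕ} (hb2 : b = 0 ∨ 2 ≤ b)
    (p : ℕ → ℝ) (X : ℝ → ℝ) (hX : Tendsto X atTop (nhds 0)) :
    Tendsto (fun r => gbar l lam b (Function.update p 1 r) * X r / r^(2:ℤ)) atTop (nhds 0) := by
  by_cases hlb : lam = b
  · subst hlb; exact tendsto_gaa_mul_div_sq l hl hb2 p X hX
  · simp only [gbar_ne l hlb, zero_mul, zero_div]
    exact tendsto_const_nhds

/-- `g_{11}·Y/r → 0` when `Y/r → 0`. -/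
lemma tendsto_g11_mul (l : ℝ) (hl : 0 < l) (p : ℕ → ℝ) (Y : ℝ → ℝ)
    (hY : Tendsto (fun r => Y r / r) atTop (nhds 0)) :
    Tendsto (fun r => gbar l 1 1 (Function.update p 1 r) * Y r / r) atTop (nhds 0) := by
  have t : Tendsto (fun r:ℝ => (1+r^2/l^2)⁻¹ * (Y r / r)) atTop (nhds (0 * 0)) :=
    (tendsto_uinv l hl).mul hY
  rw [mul_zero] at t
  refine t.congr fun r => ?_
  rw [gbar11, Function.update_self, mul_div_assoc]

/-- `Y·∂_r g_{aa}/r² → 0` when `Y/r → 0`, for `a = 0` or `a ≥ 2`. -/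
lemma tendsto_pd1gaa (l : ℝ) (hl : 0 < l) {a : ℕ} (ha2 : a = 0 ∨ 2 ≤ a) (p : ℕ → ℝ)
    (Y : ℝ → ℝ) (hY : Tendsto (fun r => Y r / r) atTop (nhds 0)) :
    Tendsto (fun r => Y r * pd 1 (gbar l a a) (Function.update p 1 r) / r^(2:ℤ)) atTop
      (nhds 0) := by
  rcases ha2 with rfl | h2
  · have t : Tendsto (fun r:ℝ => (-(2/l^2)) * (Y r / r)) atTop (nhds ((-(2/l^2)) * 0)) :=
      tendsto_const_nhds.mul hY
    rw [mul_zero] at t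
    refine t.congr' ?_
    filter_upwards [eventually_ge_atTop (1:ℝ)] with r hr1
    have hr0 : r ≠ 0 := by linarith
    have hl0 : l ≠ 0 := ne_of_gt hl
    rw [pd1_gbar00, Function.update_self, div_zpow_two]
    field_simp
    try ring
  · have t : Tendsto (fun r:ℝ => (2 * fAc a p) * (Y r / r)) atTop
        (nhds ((2 * fAc a p) * 0)) := tendsto_const_nhds.mul hY
    rw [mul_zero] at t
    refine t.congr' ?_
    filter_upwards [eventually_ge_atTop (1:ℝ)] with r hr1
    have hr0 : r ≠ 0 := by linarith
    rw [pd1_gbar_diag l h2, Function.update_self, fAc_update_lt one_lt_two, div_zpow_two]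
    field_simp
    try ring

/-- `Z·∂_c g_{aa}/r² → 0` when `Z → 0`, `a ≥ 2`, `c ≠ 1`. -/
lemma tendsto_pdcgaa (l : ℝ) {a c : ℕ} (h2a : 2 ≤ a) (hc1 : c ≠ 1) (p : ℕ → ℝ)
    (Z : ℝ → ℝ) (hZ : Tendsto Z atTop (nhds 0)) :
    Tendsto (fun r => Z r * pd c (gbar l a a) (Function.update p 1 r) / r^(2:ℤ)) atTop
      (nhds 0) := by
  set D := deriv (fun s => fAc a (Function.update p c s)) (p c) with hD
  have t : Tendsto (fun r => D * Z r) atTop (nhds (D * 0)) := tendsto_const_nhds.mul hZ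
  rw [mul_zero] at t
  refine t.congr' ?_
  filter_upwards [eventually_ge_atTop (1:ℝ)] with r hr1
  have hr0 : r ≠ 0 := by linarith
  rw [pd_gbar_diag_ray l h2a hc1, div_zpow_two, ← hD]
  field_simp
  try ring

/-- A vector field with `ξ^r = o(r)`, `ξ^a = o(1)` and compatible fall-off of
its derivatives automatically satisfies the asymptotic Killing conditions
`(L_ξḡ)_{rr} = o(r^{-2})`, `(L_ξḡ)_{ar} = o(r)`, `(L_ξḡ)_{ab} = o(r²)`. -/
theorem stmt15 (n : ℕ) (hn : 3 ≤ n) (l : ℝ) (hl : 0 < l)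
    (ξ : ℕ → (ℕ → ℝ) → ℝ)
    (hr : SmallO (ξ 1) 1)
    (ha : ∀ a ∈ idxC n, a ≠ 1 → SmallO (ξ a) 0)
    (hdrr : SmallO (pd 1 (ξ 1)) 0)
    (hdra : ∀ a ∈ idxC n, a ≠ 1 → SmallO (pd 1 (ξ a)) (-1))
    (hdcr : ∀ c ∈ idxC n, c ≠ 1 → SmallO (pd c (ξ 1)) 1)
    (hdca : ∀ c ∈ idxC n, c ≠ 1 → ∀ a ∈ idxC n, a ≠ 1 → SmallO (pd c (ξ a)) 0) :
    SmallO (lieG n l ξ 1 1) (-2) ∧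
    (∀ a ∈ idxC n, a ≠ 1 → SmallO (lieG n l ξ a 1) 1 ∧ SmallO (lieG n l ξ 1 a) 1) ∧
    (∀ a ∈ idxC n, a ≠ 1 → ∀ b ∈ idxC n, b ≠ 1 → SmallO (lieG n l ξ a b) 2) := by
  have mem0 : (0:ℕ) ∈ idxC n := mem_idxC.2 (Or.inl rfl)
  refine ⟨?_, ?_, ?_⟩
  · -- (L ḡ)_{rr} = o(r⁻²)
    intro p
    simp only [lieG, Finset.sum_div]
    rw [show nhds (0:ℝ) = nhds (∑ _x ∈ idxC n, (0:ℝ)) by simp]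
    apply tendsto_finset_sum
    intro lam hlam
    rcases mem_idxC.1 hlam with rfl | rfl | ⟨h2, hln⟩
    · simp only [pd_gbar11_ne l (show (0:ℕ) ≠ 1 by omega),
        gbar_ne l (show (0:ℕ) ≠ 1 by omega), gbar_ne l (show (1:ℕ) ≠ 0 by omega),
        mul_zero, zero_mul, add_zero, zero_add, zero_div]
      exact tendsto_const_nhds
    · have hx : Tendsto (fun r => ξ 1 (Function.update p 1 r) / r) atTop (nhds 0) := by
        simpa only [zpow_one] using hr p
      have hX : Tendsto (fun r => pd 1 (ξ 1) (Function.update p 1 r)) atTop (nhds 0) := by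
        simpa only [zpow_zero, div_one] using hdrr p
      have t1 : Tendsto (fun r:ℝ => (-(2/l^2)) * (r^2/(1+r^2/l^2))^2) atTop
          (nhds ((-(2/l^2)) * ((l^2)^2))) := tendsto_const_nhds.mul ((tendsto_sq_div_u l hl).pow 2)
      have t2 : Tendsto (fun r => (ξ 1 (Function.update p 1 r) / r) *
          ((-(2/l^2)) * (r^2/(1+r^2/l^2))^2)) atTop (nhds 0) := by
        simpa using hx.mul t1
      have t3 : Tendsto (fun r:ℝ => (2 * (r^2/(1+r^2/l^2))) *
          pd 1 (ξ 1) (Function.update p 1 r)) atTop (nhds 0) := by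
        simpa using (tendsto_const_nhds.mul (tendsto_sq_div_u l hl)).mul hX
      have key := t2.add t3
      rw [add_zero] at key
      refine key.congr' ?_
      filter_upwards [eventually_ge_atTop (1:ℝ)] with r hr1
      have hr0 : r ≠ 0 := by linarith
      have hl0 : l ≠ 0 := ne_of_gt hl
      have hu : (1 + r^2/l^2) ≠ 0 := by positivity
      rw [div_zpow_neg_two, pd1_gbar11 l hl, gbar11, Function.update_self]
      field_simp
      ring
    · have hc1 : lam ≠ 1 := by omega
      simp only [pd_gbar11_ne l hc1, gbar_ne l hc1, gbar_ne l (show 1 ≠ lam by omega),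
        mul_zero, zero_mul, add_zero, zero_add, zero_div]
      exact tendsto_const_nhds
  · -- (L ḡ)_{a r} = o(r)
    intro a hai ha1
    have ha2 : a = 0 ∨ 2 ≤ a := by
      rcases mem_idxC.1 hai with rfl | rfl | ⟨h2, _⟩
      · exact Or.inl rfl
      · exact absurd rfl ha1
      · exact Or.inr h2
    have hXa : ∀ p, Tendsto (fun r => pd 1 (ξ a) (Function.update p 1 r) * r) atTop
        (nhds 0) := fun p => by
      simpa only [div_zpow_neg_one] using hdra a hai ha1 p
    have hYa : ∀ p, Tendsto (fun r => pd a (ξ 1) (Function.update p 1 r) / r) atTop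
        (nhds 0) := fun p => by
      simpa only [zpow_one] using hdcr a hai ha1 p
    constructor <;>
    · intro p
      simp only [lieG, Finset.sum_div, zpow_one]
      rw [show nhds (0:ℝ) = nhds (∑ _x ∈ idxC n, (0:ℝ)) by simp]
      apply tendsto_finset_sum
      intro lam hlam
      rcases mem_idxC.1 hlam with rfl | rfl | ⟨h2, hln⟩
      · -- λ = 0
        rcases ha2 with rfl | h2a
        · simp only [pd_gbar_offdiag l (show (0:ℕ) ≠ 1 by omega),
            pd_gbar_offdiag l (show (1:ℕ) ≠ 0 by omega),
            gbar_ne l (show (0:ℕ) ≠ 1 by omega), gbar_ne l (show (1:ℕ) ≠ 0 by omega),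
            mul_zero, zero_mul, add_zero, zero_add]
          exact tendsto_gaa_mul_div l hl (Or.inl rfl) p _ (hXa p)
        · simp only [pd_gbar_offdiag l (show a ≠ 1 from ha1),
            pd_gbar_offdiag l (show (1:ℕ) ≠ a by omega),
            gbar_ne l (show (0:ℕ) ≠ 1 by omega), gbar_ne l (show (1:ℕ) ≠ 0 by omega),
            gbar_ne l (show a ≠ 0 by omega), gbar_ne l (show (0:ℕ) ≠ a by omega),
            mul_zero, zero_mul, add_zero, zero_add, zero_div]
          exact tendsto_const_nhds
      · -- λ = 1
        simp only [pd_gbar_offdiag l (show a ≠ 1 from ha1),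
          pd_gbar_offdiag l (show (1:ℕ) ≠ a from Ne.symm ha1),
          gbar_ne l (show a ≠ 1 from ha1), gbar_ne l (show (1:ℕ) ≠ a from Ne.symm ha1),
          mul_zero, zero_mul, add_zero, zero_add]
        exact tendsto_g11_mul l hl p _ (hYa p)
      · -- λ = c ≥ 2
        have hc1 : lam ≠ 1 := by omega
        by_cases hac : a = lam
        · subst hac
          simp only [pd_gbar_offdiag l (show a ≠ 1 from ha1),
            pd_gbar_offdiag l (show (1:ℕ) ≠ a from Ne.symm ha1),
            gbar_ne l (show a ≠ 1 from ha1), gbar_ne l (show (1:ℕ) ≠ a from Ne.symm ha1),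
            mul_zero, zero_mul, add_zero, zero_add]
          exact tendsto_gaa_mul_div l hl ha2 p _ (hXa p)
        · simp only [pd_gbar_offdiag l (show a ≠ 1 from ha1),
            pd_gbar_offdiag l (show (1:ℕ) ≠ a from Ne.symm ha1),
            gbar_ne l hc1, gbar_ne l (show (1:ℕ) ≠ lam from Ne.symm hc1),
            gbar_ne l hac, gbar_ne l (show lam ≠ a from fun h => hac h.symm),
            mul_zero, zero_mul, add_zero, zero_add, zero_div]
          exact tendsto_const_nhds
  · -- (L ḡ)_{ab} = o(r²)
    intro a hai ha1 b hbi hb1 p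
    have ha2 : a = 0 ∨ 2 ≤ a := by
      rcases mem_idxC.1 hai with rfl | rfl | ⟨h2, _⟩
      · exact Or.inl rfl
      · exact absurd rfl ha1
      · exact Or.inr h2
    have hb2 : b = 0 ∨ 2 ≤ b := by
      rcases mem_idxC.1 hbi with rfl | rfl | ⟨h2, _⟩
      · exact Or.inl rfl
      · exact absurd rfl hb1
      · exact Or.inr h2
    have hx1 : Tendsto (fun r => ξ 1 (Function.update p 1 r) / r) atTop (nhds 0) := by
      simpa only [zpow_one] using hr p
    simp only [lieG, Finset.sum_div]
    rw [show nhds (0:ℝ) = nhds (∑ _x ∈ idxC n, (0:ℝ)) by simp]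
    apply tendsto_finset_sum
    intro lam hlam
    simp only [add_div]
    have T1 : Tendsto (fun r => ξ lam (Function.update p 1 r) *
        pd lam (gbar l a b) (Function.update p 1 r) / r^(2:ℤ)) atTop (nhds 0) := by
      by_cases hab : a = b
      · subst hab
        rcases mem_idxC.1 hlam with rfl | rfl | ⟨h2, hln⟩
        · rcases ha2 with rfl | h2a
          · simp only [pd_gbar00_ne l (show (0:ℕ) ≠ 1 by omega), mul_zero, zero_div]
            exact tendsto_const_nhds
          · simp only [pd0_gbar_diag l h2a, mul_zero, zero_div]
            exact tendsto_const_nhds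
        · exact tendsto_pd1gaa l hl ha2 p _ hx1
        · have hc1 : lam ≠ 1 := by omega
          rcases ha2 with rfl | h2a
          · simp only [pd_gbar00_ne l hc1, mul_zero, zero_div]
            exact tendsto_const_nhds
          · refine tendsto_pdcgaa l h2a hc1 p _ ?_
            simpa only [zpow_zero, div_one] using ha lam hlam hc1 p
      · simp only [pd_gbar_offdiag l hab, mul_zero, zero_div]
        exact tendsto_const_nhds
    have T2 : Tendsto (fun r => gbar l lam b (Function.update p 1 r) *
        pd a (ξ lam) (Function.update p 1 r) / r^(2:ℤ)) atTop (nhds 0) := by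
      by_cases hl1 : lam = 1
      · subst hl1
        simp only [gbar_ne l (show (1:ℕ) ≠ b from Ne.symm hb1), zero_mul, zero_div]
        exact tendsto_const_nhds
      · refine tendsto_goff_mul_div_sq l hl hb2 p _ ?_
        simpa only [zpow_zero, div_one] using hdca a hai ha1 lam hlam hl1 p
    have T3 : Tendsto (fun r => gbar l a lam (Function.update p 1 r) *
        pd b (ξ lam) (Function.update p 1 r) / r^(2:ℤ)) atTop (nhds 0) := by
      by_cases hl1 : lam = 1
      · subst hl1
        simp only [gbar_ne l (show a ≠ 1 from ha1), zero_mul, zero_div]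
        exact tendsto_const_nhds
      · have h' : Tendsto (fun r => gbar l lam a (Function.update p 1 r) *
            pd b (ξ lam) (Function.update p 1 r) / r^(2:ℤ)) atTop (nhds 0) := by
          refine tendsto_goff_mul_div_sq l hl ha2 p _ ?_
          simpa only [zpow_zero, div_one] using hdca b hbi hb1 lam hlam hl1 p
        refine h'.congr fun r => ?_
        rw [gbar_symm]
    simpa using (T1.add T2).add T3
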